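/- In the weighted block model with K blocks of sizes n_1,...,n_K, intra-block edge weight p, inter-block weight q, and s_k seeds in block k, if seeds in block 1 have temperature 1 and all other seeds temperature 0, the equilibrium temperature T_k of free nodes in block k satisfies (s_1(p-q) + nq) T_1 = s_1(p-q) + n·T̄·q and (s_k(p-q) + nq) T_k = n·T̄·q for k ≥ 2, where T̄ = (1/n)∑_i T_i is the mean temperature over all nodes. -/

import Mathlib

/-- Block model: equilibrium temperatures of free nodes satisfy
`(s₁(p-q)+nq) T₁ = s₁(p-q) + n T̄ q` and `(s_k(p-q)+nq) T_k = n T̄ q` for `k ≥ 2`. -/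
theorem block_model_temperatures (K : ℕ) [NeZero K]
    (nv sv : Fin K → ℕ) (hs : ∀ k, 0 < sv k ∧ sv k < nv k)
    (p q : ℝ) (hp : 0 < p) (hq : 0 < q)
    (n : ℕ) (hn : n = ∑ k, nv k)
    (T : Fin K → ℝ)
    (hbal : ∀ k, ((nv k : ℝ) * (p - q) + (n : ℝ) * q) * T k =
      (sv 0 : ℝ) * (if k = 0 then p else q) + ((nv k : ℝ) - (sv k : ℝ)) * p * T k +
        ∑ j ∈ Finset.univ.erase k, ((nv j : ℝ) - (sv j : ℝ)) * q * T j)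
    (Tbar : ℝ)
    (hTbar : Tbar = ((sv 0 : ℝ) + ∑ j, ((nv j : ℝ) - (sv j : ℝ)) * T j) / (n : ℝ)) :
    ((sv 0 : ℝ) * (p - q) + (n : ℝ) * q) * T 0 = (sv 0 : ℝ) * (p - q) + (n : ℝ) * Tbar * q ∧
    ∀ k, k ≠ 0 → ((sv k : ℝ) * (p - q) + (n : ℝ) * q) * T k = (n : ℝ) * Tbar * q := by
  have hnpos : 0 < n := by
    rw [hn]
    exact Finset.sum_pos (fun k _ => lt_trans (hs k).1 (hs k).2) Finset.univ_nonempty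
  have hn0 : (n : ℝ) ≠ 0 := Nat.cast_ne_zero.mpr hnpos.ne'
  have hnT : (n : ℝ) * Tbar = (sv 0 : ℝ) + ∑ j, ((nv j : ℝ) - (sv j : ℝ)) * T j := by
    rw [hTbar]; field_simp
  have key : ∀ k, ((sv k : ℝ) * (p - q) + (n : ℝ) * q) * T k =
      (sv 0 : ℝ) * (if k = 0 then p else q) - (sv 0 : ℝ) * q + (n : ℝ) * Tbar * q := by
    intro k
    have h := hbal k
    rw [Finset.sum_erase_eq_sub (Finset.mem_univ k)] at h
    have hq2 : (∑ j, ((nv j : ℝ) - (sv j : ℝ)) * q * T j) =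
        q * ∑ j, ((nv j : ℝ) - (sv j : ℝ)) * T j := by
      rw [Finset.mul_sum]; exact Finset.sum_congr rfl (fun j _ => by ring)
    rw [hq2] at h
    linear_combination h - q * hnT
  constructor
  · have := key 0
    rw [if_pos rfl] at this
    linarith
  · intro k hk
    have := key k
    rw [if_neg hk] at this
    linarith
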